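/- A non-trivial weighted arithmetic mean X_w = Σ w_j X_j of calibrated predictions is not calibrated: P(E[Y | X_w] ≠ X_w) > 0. -/

import Mathlib

open MeasureTheory ProbabilityTheory

private lemma l2_mul_integrable {Ω : Type*} [MeasurableSpace Ω] {μ : Measure Ω}
    {f g : Ω → ℝ} (hf : MemLp f 2 μ) (hg : MemLp g 2 μ) :
    Integrable (fun ω => f ω * g ω) μ := by
  have hpqr : (1 : ENNReal) / 1 = 1 / 2 + 1 / 2 := by
    rw [ENNReal.div_add_div_same, one_div_one, one_add_one_eq_two]
    exact (ENNReal.div_self two_ne_zero ENNReal.ofNat_ne_top).symm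
  have h : MemLp (f • g) 1 μ := by
    haveI : ENNReal.HolderTriple 2 2 1 := ⟨by simpa [one_div] using hpqr.symm⟩
    exact hg.smul hf
  rw [memLp_one_iff_integrable] at h
  exact h

private lemma sm_of_comap {Ω : Type*} (f : Ω → ℝ) :
    StronglyMeasurable[MeasurableSpace.comap f Real.measurableSpace] f := by
  letI : MeasurableSpace Ω := MeasurableSpace.comap f Real.measurableSpace
  have hfm : Measurable f := fun s hs => ⟨s, hs, rfl⟩
  exact hfm.stronglyMeasurable

/-- A non-trivial weighted arithmetic mean `X_w = Σ wⱼ Xⱼ` of calibrated predictions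
is not calibrated: `P(E[Y | X_w] ≠ X_w) > 0`. -/
theorem weighted_mean_not_calibrated
    {Ω : Type*} [m : MeasurableSpace Ω] (μ : Measure Ω) [IsProbabilityMeasure μ]
    {N : ℕ} (Y : Ω → ℝ) (X : Fin N → Ω → ℝ) (w : Fin N → ℝ)
    (hY : MemLp Y 2 μ) (hX : ∀ j, MemLp (X j) 2 μ)
    (hw : ∀ j, 0 ≤ w j) (hw1 : ∑ j, w j = 1)
    (hle : ∀ j, MeasurableSpace.comap (X j) Real.measurableSpace ≤ m)
    (hcal : ∀ j, X j =ᵐ[μ] μ[Y | MeasurableSpace.comap (X j) Real.measurableSpace])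
    (hnontriv : ∃ i j : Fin N, i ≠ j ∧ 0 < w i ∧ 0 < w j ∧
      0 < μ {ω | X i ω ≠ X j ω})
    (Xw : Ω → ℝ) (hXw : Xw = fun ω => ∑ j, w j * X j ω)
    (Z : Ω → ℝ) (hZ : Z = μ[Y | MeasurableSpace.comap Xw Real.measurableSpace]) :
    0 < μ {ω | Z ω ≠ Xw ω} := by
  by_contra hcon
  push_neg at hcon
  have hZXw : Z =ᵐ[μ] Xw := by
    rw [Filter.EventuallyEq, ae_iff]
    exact le_antisymm hcon zero_le
  -- measurability
  have hXm : ∀ j, Measurable (X j) := fun j => Measurable.of_comap_le (hle j)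
  have hXwm : Measurable Xw := by
    rw [hXw]; exact Finset.measurable_sum _ fun j _ => (hXm j).const_mul (w j)
  have hmw : MeasurableSpace.comap Xw Real.measurableSpace ≤ m := hXwm.comap_le
  have hXw2 : MemLp Xw 2 μ := by
    rw [hXw]
    have h := memLp_finset_sum' Finset.univ (fun j (_ : j ∈ Finset.univ) => (hX j).const_mul (w j))
    have he : (fun ω => ∑ j, w j * X j ω) = ∑ j : Fin N, fun ω => w j * X j ω := by
      ext ω; simp
    rw [he]; exact h
  have hYint : Integrable Y μ := hY.integrable one_le_two
  -- the key fact for any L² function f measurable w.r.t. its own σ-algebra that is calibrated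
  have key : ∀ (f : Ω → ℝ), MemLp f 2 μ →
      (MeasurableSpace.comap f Real.measurableSpace ≤ m) →
      f =ᵐ[μ] μ[Y | MeasurableSpace.comap f Real.measurableSpace] →
      ∫ ω, f ω * Y ω ∂μ = ∫ ω, f ω * f ω ∂μ := by
    intro f hf2 hm' hfcal
    have hfsm : StronglyMeasurable[MeasurableSpace.comap f Real.measurableSpace] f :=
      sm_of_comap f
    have hfY : Integrable (fun ω => f ω * Y ω) μ := l2_mul_integrable hf2 hY
    have hfY' : Integrable (f * Y) μ := hfY
    calc ∫ ω, f ω * Y ω ∂μ = ∫ ω, (μ[(f * Y)|MeasurableSpace.comap f Real.measurableSpace]) ω ∂μ := (integral_condExp hm').symm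
      _ = ∫ ω, (f * μ[Y|MeasurableSpace.comap f Real.measurableSpace]) ω ∂μ :=
          integral_congr_ae (condExp_mul_of_stronglyMeasurable_left hfsm hfY' hYint)
      _ = ∫ ω, f ω * f ω ∂μ := by
          refine integral_congr_ae ?_
          filter_upwards [hfcal] with ω hω
          simp [Pi.mul_apply, ← hω]
  have keyj : ∀ j, ∫ ω, X j ω * Y ω ∂μ = ∫ ω, X j ω * X j ω ∂μ :=
    fun j => key (X j) (hX j) (hle j) (hcal j)
  have keyw : ∫ ω, Xw ω * Y ω ∂μ = ∫ ω, Xw ω * Xw ω ∂μ := by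
    refine key Xw hXw2 hmw ?_
    exact hZXw.symm.trans (by rw [hZ])
  -- ∫ Xw Y = Σ wⱼ ∫ Xⱼ Y
  have hsum : ∫ ω, Xw ω * Y ω ∂μ = ∑ j, w j * ∫ ω, X j ω * Y ω ∂μ := by
    have h1 : ∀ ω, Xw ω * Y ω = ∑ j, w j * (X j ω * Y ω) := by
      intro ω; rw [hXw]; simp [Finset.sum_mul, mul_assoc]
    simp_rw [h1]
    rw [integral_finset_sum _ fun j _ =>
      ((l2_mul_integrable (hX j) hY)).const_mul (w j)]
    simp_rw [integral_const_mul]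
  -- the gap function
  set g : Ω → ℝ := fun ω => ∑ j, w j * (X j ω - Xw ω) ^ 2 with hg
  have hg_nonneg : ∀ ω, 0 ≤ g ω := fun ω =>
    Finset.sum_nonneg fun j _ => mul_nonneg (hw j) (sq_nonneg _)
  have hg_eq : ∀ ω, g ω = (∑ j, w j * (X j ω * X j ω)) - Xw ω * Xw ω := by
    intro ω
    have h1 : Xw ω = ∑ j, w j * X j ω := by rw [hXw]
    have h2 : ∀ j : Fin N, w j * (X j ω - Xw ω) ^ 2
        = w j * (X j ω * X j ω) - (2 * Xw ω) * (w j * X j ω) + (Xw ω * Xw ω) * w j := by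
      intro j; ring
    simp only [hg]
    rw [Finset.sum_congr rfl fun j _ => h2 j, Finset.sum_add_distrib,
      Finset.sum_sub_distrib, ← Finset.mul_sum, ← Finset.mul_sum, ← h1, hw1]
    ring
  have hgint : Integrable g μ := by
    refine integrable_finset_sum _ fun j _ => ?_
    exact (((hX j).sub hXw2).integrable_sq).const_mul (w j)
  -- ∫ g = 0
  have hint_g : ∫ ω, g ω ∂μ = 0 := by
    have h2 : ∫ ω, g ω ∂μ
        = (∑ j, w j * ∫ ω, X j ω * X j ω ∂μ) - ∫ ω, Xw ω * Xw ω ∂μ := by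
      simp_rw [hg_eq]
      rw [integral_sub (integrable_finset_sum _ fun j _ =>
          (l2_mul_integrable (hX j) (hX j)).const_mul (w j))
          (l2_mul_integrable hXw2 hXw2),
        integral_finset_sum _ fun j _ =>
          (l2_mul_integrable (hX j) (hX j)).const_mul (w j)]
      simp_rw [integral_const_mul]
    rw [h2]
    simp_rw [← keyj, ← keyw, ← hsum]
    ring
  -- but ∫ g > 0
  obtain ⟨i, j, hij, hwi, hwj, hposij⟩ := hnontriv
  have hsubset : {ω | X i ω ≠ X j ω} ⊆ Function.support g := by
    intro ω hω
    simp only [Set.mem_setOf_eq] at hω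
    have : 0 < g ω := by
      show 0 < ∑ k, w k * (X k ω - Xw ω) ^ 2
      rcases ne_or_eq (X i ω) (Xw ω) with h | h
      · have hne := sub_ne_zero.mpr h
        have hterm : 0 < w i * (X i ω - Xw ω) ^ 2 :=
          mul_pos hwi (by positivity)
        exact lt_of_lt_of_le hterm (Finset.single_le_sum
          (f := fun k => w k * (X k ω - Xw ω) ^ 2)
          (fun k _ => mul_nonneg (hw k) (sq_nonneg _)) (Finset.mem_univ i))
      · have h' : X j ω ≠ Xw ω := by rw [← h]; exact fun hc => hω hc.symm
        have hne := sub_ne_zero.mpr h'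
        have hterm : 0 < w j * (X j ω - Xw ω) ^ 2 :=
          mul_pos hwj (by positivity)
        exact lt_of_lt_of_le hterm (Finset.single_le_sum
          (f := fun k => w k * (X k ω - Xw ω) ^ 2)
          (fun k _ => mul_nonneg (hw k) (sq_nonneg _)) (Finset.mem_univ j))
    exact ne_of_gt this
  have hpos : 0 < ∫ ω, g ω ∂μ := by
    rw [integral_pos_iff_support_of_nonneg_ae
      (Filter.Eventually.of_forall hg_nonneg) hgint]
    exact lt_of_lt_of_le hposij (measure_mono hsubset)
  rw [hint_g] at hpos
  exact lt_irrefl 0 hpos
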